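/- For every i = 1, …, r there exists a valuation ω of L extending ν such that ω(φ_i(α)) > 0. -/

import Mathlib

open Polynomial

section Helpers

variable {K L : Type*} [Field K] [Field L] [Algebra K L]
variable {Γ₀ : Type*} [LinearOrderedCommGroupWithZero Γ₀]

/-- The Gauss valuation of a polynomial `P ∈ K[x]`, computed in the value group of a
valuation `w` on an extension `L` of `K`: multiplicatively it is the supremum of the
`w`-values of the coefficients (additively, the minimum of the valuations of the
coefficients). -/
noncomputable def gaussVal {Γ' : Type*} [LinearOrderedCommGroupWithZero Γ']
    (w : Valuation L Γ') (P : K[X]) : Γ' :=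
  (Finset.range (P.natDegree + 1)).sup'
    (Finset.nonempty_range_iff.mpr (Nat.succ_ne_zero _))
    fun n => w (algebraMap K L (P.coeff n))

/-- `σ` is the smallest positive element of the value group of `v`: multiplicatively,
`σ` is the greatest element `< 1` among the nonzero values of `v`. -/
def IsMinPosValue (v : Valuation K Γ₀) (σ : Γ₀) : Prop :=
  IsGreatest {γ : Γ₀ | γ ≠ 0 ∧ γ < 1 ∧ ∃ x : K, v x = γ} σ

/-- The set of valuation subrings of `L` whose corresponding valuation extends `v`,
i.e. those lying over the valuation ring of `v`. (Valuations of `L` up to equivalence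
are the same thing as valuation subrings of `L`.) -/
def valuationExtensions (v : Valuation K Γ₀) : Set (ValuationSubring L) :=
  {O | O.comap (algebraMap K L) = v.valuationSubring}

end Helpers

/-- An element of the valuation ring of value `< 1` lies in the maximal ideal. -/
lemma aux_mem_maximalIdeal {K : Type*} [Field K] {Γ₀ : Type*}
    [LinearOrderedCommGroupWithZero Γ₀] (v : Valuation K Γ₀)
    (x : ↥v.valuationSubring) (h : v x.1 < 1) :
    x ∈ IsLocalRing.maximalIdeal ↥v.valuationSubring := by
  rw [IsLocalRing.mem_maximalIdeal, mem_nonunits_iff]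
  intro hu
  obtain ⟨y, hy⟩ := isUnit_iff_exists_inv.mp hu
  have h1 : (x.1 : K) * y.1 = 1 := congrArg Subtype.val hy
  have h2 : v x.1 * v y.1 = 1 := by rw [← map_mul, h1, map_one]
  have h3 : v y.1 ≤ 1 := y.2
  have : v x.1 * v y.1 < 1 :=
    lt_of_le_of_lt (mul_le_of_le_one_right' h3) h
  exact absurd h2 this.ne

/-- **Lemma 2.2 (i)**: for every `i = 1, …, r` there is a valuation `ω` of `L`
extending `ν` such that `ω(φᵢ(α)) > 0` (multiplicatively: `ω(φᵢ(α)) < 1`). -/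
theorem stmt_3
    {K L : Type*} [Field K] [Field L] [Algebra K L]
    {Γ₀ : Type*} [LinearOrderedCommGroupWithZero Γ₀]
    (v : Valuation K Γ₀)
    [Algebra ↥v.valuationSubring L] [IsScalarTower (↥v.valuationSubring) K L]
    (f : Polynomial ↥v.valuationSubring) (hfmonic : f.Monic)
    (hfirr : Irreducible (f.map (algebraMap (↥v.valuationSubring) K)))
    (α : L) (hαroot : Polynomial.aeval α f = 0)
    (hαgen : Algebra.adjoin K {α} = ⊤)
    (r : ℕ) (l : Fin r → ℕ) (hl : ∀ i, 1 ≤ l i)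
    (φ : Fin r → Polynomial ↥v.valuationSubring)
    (hφmonic : ∀ i, (φ i).Monic)
    (hφirr : ∀ i, Irreducible ((φ i).map (IsLocalRing.residue ↥v.valuationSubring)))
    (hφdist : ∀ i j, i ≠ j →
      (φ i).map (IsLocalRing.residue ↥v.valuationSubring) ≠
        (φ j).map (IsLocalRing.residue ↥v.valuationSubring))
    (hfbar : f.map (IsLocalRing.residue ↥v.valuationSubring) =
      ∏ i, ((φ i).map (IsLocalRing.residue ↥v.valuationSubring)) ^ (l i)) :
    ∀ i, ∃ O : ValuationSubring L,
      O ∈ valuationExtensions (L := L) v ∧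
      O.valuation (Polynomial.aeval α (φ i)) < 1 := by
  intro i
  set R := ↥v.valuationSubring
  set res := IsLocalRing.residue R
  -- the evaluation homomorphism R[X] → L
  set ψ : R[X] →+* L := (Polynomial.aeval α : R[X] →ₐ[R] L).toRingHom with hψ
  have hψapply : ∀ P : R[X], ψ P = Polynomial.aeval α P := fun _ => rfl
  -- the ideal J₀ of R[X]
  set J₀ : Ideal R[X] :=
    Ideal.span {φ i} ⊔ Ideal.map (Polynomial.C : R →+* R[X])
      (IsLocalRing.maximalIdeal R) with hJ₀
  -- the reduction homomorphism χ : R[X] → k[X]/(φ̄ᵢ)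
  set I : Ideal (Polynomial (IsLocalRing.ResidueField R)) :=
    Ideal.span {(φ i).map res} with hI
  set χ : R[X] →+* (Polynomial (IsLocalRing.ResidueField R)) ⧸ I :=
    (Ideal.Quotient.mk I).comp (Polynomial.mapRingHom res) with hχ
  -- χ kills φ i
  have hχφ : χ (φ i) = 0 := by
    rw [hχ, RingHom.comp_apply, Ideal.Quotient.eq_zero_iff_mem]
    exact Ideal.subset_span rfl
  -- χ kills constants from the maximal ideal
  have hχC : ∀ m ∈ IsLocalRing.maximalIdeal R, χ (Polynomial.C m) = 0 := by
    intro m hm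
    have : res m = 0 := Ideal.Quotient.eq_zero_iff_mem.mpr hm
    rw [hχ, RingHom.comp_apply, Polynomial.coe_mapRingHom, Polynomial.map_C, this,
      Polynomial.C_0, map_zero]
  -- χ kills f
  have hχf : χ f = 0 := by
    rw [hχ, RingHom.comp_apply, Ideal.Quotient.eq_zero_iff_mem,
      Polynomial.coe_mapRingHom, hfbar, hI, Ideal.mem_span_singleton]
    exact dvd_trans (dvd_pow_self _ (Nat.one_le_iff_ne_zero.mp (hl i)))
      (Finset.dvd_prod_of_mem _ (Finset.mem_univ i))
  -- χ kills the kernel of ψ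
  have hinj : Function.Injective (algebraMap R K) := fun a b h => Subtype.ext h
  have hker : ∀ P : R[X], ψ P = 0 → χ P = 0 := by
    intro P hP
    have hfK0 : Polynomial.aeval α (f.map (algebraMap R K)) = 0 := by
      rwa [Polynomial.aeval_map_algebraMap]
    have hmin : f.map (algebraMap R K) = minpoly K α :=
      (minpoly.eq_of_irreducible_of_monic hfirr hfK0 (hfmonic.map _))
    have hPK0 : Polynomial.aeval α (P.map (algebraMap R K)) = 0 := by
      rw [Polynomial.aeval_map_algebraMap]; exact hP
    have hdvdK : f.map (algebraMap R K) ∣ P.map (algebraMap R K) := by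
      rw [hmin]; exact minpoly.dvd K α hPK0
    have hdvd : f ∣ P := (Polynomial.map_dvd_map _ hinj hfmonic).mp hdvdK
    obtain ⟨Q, rfl⟩ := hdvd
    rw [map_mul, hχf, zero_mul]
  -- J₀ ⊔ ker ψ ≠ ⊤
  have hle : J₀ ⊔ RingHom.ker ψ.rangeRestrict ≤ RingHom.ker χ := by
    refine sup_le (sup_le ?_ ?_) ?_
    · rw [Ideal.span_le, Set.singleton_subset_iff]; exact hχφ
    · rw [Ideal.map_le_iff_le_comap]
      intro m hm
      exact Ideal.mem_comap.mpr (hχC m hm)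
    · intro P hP
      exact hker P (congrArg Subtype.val hP)
  have hone : (1 : R[X]) ∉ J₀ ⊔ RingHom.ker ψ.rangeRestrict := by
    intro h
    have := hle h
    rw [RingHom.mem_ker, map_one] at this
    have h1 : (1 : Polynomial (IsLocalRing.ResidueField R)) ∈ I :=
      Ideal.Quotient.eq_zero_iff_mem.mp this
    rw [hI, Ideal.mem_span_singleton] at h1
    exact (hφirr i).not_isUnit (isUnit_of_dvd_one h1)
  -- push J₀ to the range of ψ
  set S : Subring L := ψ.range with hS
  set J : Ideal S := Ideal.map ψ.rangeRestrict J₀ with hJ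
  have hJne : J ≠ ⊤ := by
    intro h
    apply hone
    have hcm := Ideal.comap_map_of_surjective ψ.rangeRestrict
      ψ.rangeRestrict_surjective J₀
    have htop : Ideal.comap ψ.rangeRestrict J = ⊤ := by rw [h]; exact Ideal.comap_top
    rw [hJ, hcm] at htop
    have : J₀ ⊔ RingHom.ker ψ.rangeRestrict = ⊤ := htop
    rw [this]
    trivial
  obtain ⟨M, hMmax, hJM⟩ := Ideal.exists_le_maximal J hJne
  haveI : M.IsPrime := hMmax.isPrime
  set A : LocalSubring L := LocalSubring.ofPrime S M with hA
  obtain ⟨B, hAB⟩ := A.exists_le_valuationSubring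
  -- key: elements of M have B-valuation < 1
  have hkey : ∀ s : S, s ∈ M → B.valuation s.1 < 1 := by
    intro s hs
    have hsA : s.1 ∈ A.toSubring := LocalSubring.le_ofPrime S M s.2
    have hmap : algebraMap S A.toSubring s = ⟨s.1, hsA⟩ := rfl
    have hnonunit : ¬ IsUnit (⟨s.1, hsA⟩ : A.toSubring) := by
      rw [← hmap]
      intro hu
      exact (IsLocalization.AtPrime.isUnit_to_map_iff A.toSubring M s).mp hu hs
    have hsB : s.1 ∈ B.toSubring := hAB.1 hsA
    have hBnonunit : ¬ IsUnit (⟨s.1, hsB⟩ : B.toSubring) := by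
      intro hu
      apply hnonunit
      have : Subring.inclusion hAB.1 ⟨s.1, hsA⟩ = ⟨s.1, hsB⟩ := rfl
      exact hAB.2.1 _ (this ▸ hu)
    have : (⟨s.1, hsB⟩ : B) ∈ IsLocalRing.maximalIdeal B := by
      rw [IsLocalRing.mem_maximalIdeal, mem_nonunits_iff]; exact hBnonunit
    exact (ValuationSubring.valuation_lt_one_iff B ⟨s.1, hsB⟩).mp this
  -- β = φᵢ(α) has valuation < 1
  have hβS : Polynomial.aeval α (φ i) ∈ S := ⟨φ i, rfl⟩
  have hβval : B.valuation (Polynomial.aeval α (φ i)) < 1 := by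
    have hmem : ψ.rangeRestrict (φ i) ∈ M := by
      apply hJM
      exact Ideal.mem_map_of_mem _ (Ideal.mem_sup_left (Ideal.subset_span rfl))
    have := hkey _ hmem
    exact this
  -- elements of R with v-value < 1 (in K) pushed to L have B-valuation < 1
  have hRval : ∀ m : R, m ∈ IsLocalRing.maximalIdeal R →
      B.valuation (algebraMap K L m.1) < 1 := by
    intro m hm
    have hmem : ψ.rangeRestrict (Polynomial.C m) ∈ M := by
      apply hJM
      exact Ideal.mem_map_of_mem _
        (Ideal.mem_sup_right (Ideal.mem_map_of_mem _ hm))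
    have := hkey _ hmem
    have heq : (ψ.rangeRestrict (Polynomial.C m) : L) = algebraMap K L m.1 := by
      show ψ (Polynomial.C m) = algebraMap K L m.1
      rw [hψapply, Polynomial.aeval_C, IsScalarTower.algebraMap_apply R K L]
      rfl
    rwa [heq] at this
  -- membership of R elements in B
  have hRB : ∀ m : R, algebraMap K L m.1 ∈ B := by
    intro m
    have : algebraMap K L m.1 ∈ S := by
      refine ⟨Polynomial.C m, ?_⟩
      rw [hψapply, Polynomial.aeval_C, IsScalarTower.algebraMap_apply R K L]
      rfl
    exact hAB.1 (LocalSubring.le_ofPrime S M this)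
  refine ⟨B, ?_, hβval⟩
  -- B extends v
  show B.comap (algebraMap K L) = v.valuationSubring
  ext x
  show algebraMap K L x ∈ B ↔ x ∈ v.valuationSubring
  constructor
  · intro hx
    rw [Valuation.mem_valuationSubring_iff]
    by_contra hv
    push_neg at hv
    have hx0 : x ≠ 0 := by
      intro h; rw [h, map_zero] at hv; exact absurd hv (by simp)
    have hinv : v x⁻¹ < 1 := by
      rw [map_inv₀, inv_lt_one₀ (lt_trans zero_lt_one hv)]
      exact hv
    have hm : (⟨x⁻¹, hinv.le⟩ : R) ∈ IsLocalRing.maximalIdeal R :=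
      aux_mem_maximalIdeal v _ hinv
    have h1 := hRval ⟨x⁻¹, hinv.le⟩ hm
    have h2 : B.valuation (algebraMap K L x) ≤ 1 :=
      (ValuationSubring.valuation_le_one_iff B _).mpr hx
    have h3 : B.valuation (algebraMap K L x) * B.valuation (algebraMap K L x⁻¹) = 1 := by
      rw [← map_mul, ← map_mul, mul_inv_cancel₀ hx0, map_one, map_one]
    have h4 : B.valuation (algebraMap K L x) * B.valuation (algebraMap K L x⁻¹) < 1 :=
      lt_of_le_of_lt
        (by simpa using mul_le_mul_left h2 (B.valuation (algebraMap K L x⁻¹))) h1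
    exact absurd h3 h4.ne
  · intro hx
    exact hRB ⟨x, hx⟩
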